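/- arXiv:1906.12312 — 3 statements merged into one kernel-verified Lean document; each statement's English description precedes it below -/
import Mathlib

section
/- Let q : ℤⁿ → ℤ be an integral quadratic form, q(x) = Σ_{i ≤ j} q_{ij} x_i x_j with all q_{ij} ∈ ℤ, and let q_ℝ : ℝⁿ → ℝ be the same polynomial considered over the reals. Then q_ℝ(x) > 0 for every nonzero x ∈ ℝⁿ if and only if q(x) > 0 for every nonzero x ∈ ℤⁿ. -/
open BigOperators Finset Matrix

section Aux

variable {n : ℕ}

/-- The quadratic form `∑_{i ≤ j} c i j * x i * x j` over a commutative ring. -/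
def Qaux {R : Type*} [CommRing R] (c : Fin n → Fin n → R) (x : Fin n → R) : R :=
  ∑ i, ∑ j, if i ≤ j then c i j * x i * x j else 0

/-- The symmetrized matrix of the quadratic form (twice the Gram matrix). -/
def Maux {R : Type*} [CommRing R] (c : Fin n → Fin n → R) : Matrix (Fin n) (Fin n) R :=
  Matrix.of fun i j => if i = j then 2 * c i i else if i < j then c i j else c j i

lemma Maux_symm {R : Type*} [CommRing R] (c : Fin n → Fin n → R) (i j : Fin n) :
    Maux c j i = Maux c i j := by
  rcases lt_trichotomy i j with h | h | h
  · simp [Maux, h, h.ne, h.ne', not_lt_of_gt h]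
  · simp [Maux, h]
  · simp [Maux, h, h.ne, h.ne', not_lt_of_gt h]

lemma Qaux_map {R S : Type*} [CommRing R] [CommRing S] (f : R →+* S)
    (c : Fin n → Fin n → R) (x : Fin n → R) :
    Qaux (fun i j => f (c i j)) (fun i => f (x i)) = f (Qaux c x) := by
  simp [Qaux, map_sum, apply_ite f]

lemma Qaux_cast_int_rat (q : Fin n → Fin n → ℤ) (w : Fin n → ℤ) :
    Qaux (fun i j => (q i j : ℚ)) (fun i => (w i : ℚ)) = ((Qaux q w : ℤ) : ℚ) := by
  simpa using Qaux_map (Int.castRingHom ℚ) q w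

lemma Qaux_cast_int_real (q : Fin n → Fin n → ℤ) (w : Fin n → ℤ) :
    Qaux (fun i j => (q i j : ℝ)) (fun i => (w i : ℝ)) = ((Qaux q w : ℤ) : ℝ) := by
  simpa using Qaux_map (Int.castRingHom ℝ) q w

lemma Qaux_cast_rat_real (q : Fin n → Fin n → ℤ) (v : Fin n → ℚ) :
    Qaux (fun i j => (q i j : ℝ)) (fun i => ((v i : ℚ) : ℝ))
      = ((Qaux (fun i j => (q i j : ℚ)) v : ℚ) : ℝ) := by
  simpa using Qaux_map (Rat.castHom ℝ) (fun i j => (q i j : ℚ)) v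

lemma Qaux_smul {R : Type*} [CommRing R] (c : Fin n → Fin n → R) (d : R) (x : Fin n → R) :
    Qaux c (fun i => d * x i) = d ^ 2 * Qaux c x := by
  simp only [Qaux, Finset.mul_sum]
  refine Finset.sum_congr rfl fun i _ => Finset.sum_congr rfl fun j _ => ?_
  split_ifs <;> ring

lemma dot_Maux {R : Type*} [CommRing R] (c : Fin n → Fin n → R) (x : Fin n → R) :
    x ⬝ᵥ (Maux c) *ᵥ x = 2 * Qaux c x := by
  classical
  have expand : x ⬝ᵥ (Maux c) *ᵥ x = ∑ i, ∑ j, x i * (Maux c i j * x j) := by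
    simp [dotProduct, Matrix.mulVec, Finset.mul_sum]
  set A : Fin n → Fin n → R := fun i j => if i = j then 2 * c i i * x i * x j else 0 with hA
  set B : Fin n → Fin n → R := fun i j => if i < j then c i j * x i * x j else 0 with hB
  set C : Fin n → Fin n → R := fun i j => if j < i then c j i * x i * x j else 0 with hC
  have step1 : ∀ i j, x i * (Maux c i j * x j) = A i j + B i j + C i j := by
    intro i j
    rcases lt_trichotomy i j with h | h | h
    · simp only [hA, hB, hC, Maux, Matrix.of_apply]
      rw [if_neg h.ne, if_pos h, if_neg h.ne, if_pos h, if_neg (not_lt_of_gt h)]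
      ring
    · subst h
      simp only [hA, hB, hC, Maux, Matrix.of_apply, if_pos rfl, lt_irrefl, if_false, if_true,
        add_zero, eq_self_iff_true]
      ring
    · simp only [hA, hB, hC, Maux, Matrix.of_apply]
      rw [if_neg h.ne', if_neg (not_lt_of_gt h), if_neg h.ne', if_neg (not_lt_of_gt h), if_pos h]
      ring
  have step2 : ∀ i j : Fin n, 2 * (if i ≤ j then c i j * x i * x j else 0) =
      A i j + 2 * B i j := by
    intro i j
    rcases lt_trichotomy i j with h | h | h
    · simp only [hA, hB]
      rw [if_pos h.le, if_neg h.ne, if_pos h]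
      ring
    · subst h
      simp only [hA, hB, if_pos le_rfl, if_pos rfl, lt_irrefl, if_false, if_true,
        eq_self_iff_true]
      ring
    · simp only [hA, hB]
      rw [if_neg (not_le_of_gt h), if_neg h.ne', if_neg (not_lt_of_gt h)]
      ring
  have hCB : ∑ i, ∑ j, C i j = ∑ i, ∑ j, B i j := by
    rw [Finset.sum_comm]
    refine Finset.sum_congr rfl fun i _ => Finset.sum_congr rfl fun j _ => ?_
    simp only [hB, hC]
    split_ifs <;> ring
  calc x ⬝ᵥ (Maux c) *ᵥ x = ∑ i, ∑ j, (A i j + B i j + C i j) := by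
        rw [expand]
        exact Finset.sum_congr rfl fun i _ => Finset.sum_congr rfl fun j _ => step1 i j
    _ = (∑ i, ∑ j, A i j) + (∑ i, ∑ j, B i j) + (∑ i, ∑ j, C i j) := by
        simp [Finset.sum_add_distrib]
    _ = (∑ i, ∑ j, A i j) + 2 * (∑ i, ∑ j, B i j) := by rw [hCB]; ring
    _ = ∑ i, ∑ j, (A i j + 2 * B i j) := by
        simp [Finset.sum_add_distrib, Finset.mul_sum]
    _ = ∑ i, ∑ j, 2 * (if i ≤ j then c i j * x i * x j else 0) :=
        Finset.sum_congr rfl fun i _ => Finset.sum_congr rfl fun j _ => (step2 i j).symm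
    _ = 2 * Qaux c x := by simp [Qaux, Finset.mul_sum]

lemma Qaux_continuous (c : Fin n → Fin n → ℝ) : Continuous fun x : Fin n → ℝ => Qaux c x := by
  refine continuous_finset_sum _ fun i _ => continuous_finset_sum _ fun j _ => ?_
  split_ifs
  · exact ((continuous_const.mul (continuous_apply i)).mul (continuous_apply j))
  · exact continuous_const

/-- Positivity over nonzero integer vectors implies positivity over nonzero rational vectors. -/
lemma Qaux_rat_pos (q : Fin n → Fin n → ℤ)
    (hZ : ∀ v : Fin n → ℤ, v ≠ 0 → 0 < Qaux q v)
    (v : Fin n → ℚ) (hv : v ≠ 0) : 0 < Qaux (fun i j => (q i j : ℚ)) v := by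
  classical
  set d : ℤ := ∏ i, ((v i).den : ℤ) with hd
  have hdpos : 0 < d := Finset.prod_pos fun i _ => by positivity
  have key : ∀ i, ∃ m : ℤ, (m : ℚ) = (d : ℚ) * v i := by
    intro i
    obtain ⟨c, hc⟩ : ((v i).den : ℤ) ∣ d := Finset.dvd_prod_of_mem _ (Finset.mem_univ i)
    refine ⟨(v i).num * c, ?_⟩
    have hdenne : (((v i).den : ℚ)) ≠ 0 := by exact_mod_cast (v i).den_ne_zero
    have hden : v i * ((v i).den : ℚ) = (v i).num := by
      conv_lhs => lhs; rw [← Rat.num_div_den (v i)]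
      exact div_mul_cancel₀ _ hdenne
    have hcq : (d : ℚ) = ((v i).den : ℚ) * (c : ℚ) := by exact_mod_cast hc
    push_cast
    rw [hcq, mul_comm ((v i).den : ℚ) (c : ℚ), mul_assoc,
      mul_comm ((v i).den : ℚ) (v i), hden]
    ring
  choose w hw using key
  have hwne : w ≠ 0 := by
    intro h0
    obtain ⟨k, hk⟩ := Function.ne_iff.mp hv
    have h1 : (d : ℚ) * v k = 0 := by rw [← hw k, h0]; simp
    rcases mul_eq_zero.mp h1 with h | h
    · exact absurd h (by exact_mod_cast hdpos.ne')
    · exact hk (by simpa using h)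
  have hpos := hZ w hwne
  have hcast : ((Qaux q w : ℤ) : ℚ) = (d : ℚ) ^ 2 * Qaux (fun i j => (q i j : ℚ)) v := by
    rw [← Qaux_cast_int_rat q w]
    have hww : (fun i => ((w i : ℤ) : ℚ)) = fun i => (d : ℚ) * v i := funext fun i => hw i
    rw [hww, Qaux_smul]
  have h1 : (0 : ℚ) < (d : ℚ) ^ 2 * Qaux (fun i j => (q i j : ℚ)) v := by
    rw [← hcast]; exact_mod_cast hpos
  have hd2 : (0 : ℚ) < (d : ℚ) ^ 2 := by positivity
  by_contra hle
  push_neg at hle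
  nlinarith

/-- Positivity over nonzero integer vectors implies nonnegativity over all real vectors. -/
lemma Qaux_real_nonneg (q : Fin n → Fin n → ℤ)
    (hZ : ∀ v : Fin n → ℤ, v ≠ 0 → 0 < Qaux q v)
    (x : Fin n → ℝ) : 0 ≤ Qaux (fun i j => (q i j : ℝ)) x := by
  classical
  set S : Set (Fin n → ℝ) := {y | 0 ≤ Qaux (fun i j => (q i j : ℝ)) y} with hS
  have hSclosed : IsClosed S := isClosed_le continuous_const (Qaux_continuous _)
  have hdense : Dense (Set.pi Set.univ fun _ : Fin n => Set.range ((↑) : ℚ → ℝ)) :=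
    dense_pi Set.univ fun i _ => Rat.denseRange_cast
  have hsub : (Set.pi Set.univ fun _ : Fin n => Set.range ((↑) : ℚ → ℝ)) ⊆ S := by
    intro y hy
    choose v hv using fun i => hy i (Set.mem_univ i)
    have hyv : y = fun i => ((v i : ℚ) : ℝ) := by funext i; exact (hv i).symm
    rw [hS, Set.mem_setOf_eq, hyv, Qaux_cast_rat_real]
    rcases eq_or_ne v 0 with rfl | hvne
    · simp [Qaux]
    · have := Qaux_rat_pos q hZ v hvne
      positivity
  have hcl : closure (Set.pi Set.univ fun _ : Fin n => Set.range ((↑) : ℚ → ℝ)) ⊆ S :=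
    hSclosed.closure_subset_iff.mpr hsub
  exact hcl (hdense.closure_eq ▸ Set.mem_univ x)

end Aux

/-- For an integral quadratic form `q(x) = ∑_{i ≤ j} q_{ij} x_i x_j`, positivity of
the corresponding real form on all nonzero real vectors is equivalent to
positivity of `q` on all nonzero integer vectors. -/
theorem integral_quadratic_form_posDef_iff (n : ℕ) (q : Fin n → Fin n → ℤ) :
    (∀ x : Fin n → ℝ, x ≠ 0 →
        0 < ∑ i, ∑ j, if i ≤ j then (q i j : ℝ) * x i * x j else 0) ↔
      (∀ v : Fin n → ℤ, v ≠ 0 →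
        0 < ∑ i, ∑ j, if i ≤ j then q i j * v i * v j else 0) := by
  classical
  constructor
  · intro hR v hv
    have hx : (fun i => ((v i : ℤ) : ℝ)) ≠ 0 := by
      intro h0
      apply hv
      funext i
      have := congrFun h0 i
      simp at this
      simpa using this
    have h1 := hR _ hx
    rw [show (∑ i, ∑ j, if i ≤ j then (q i j : ℝ) * (v i : ℝ) * (v j : ℝ) else 0)
        = Qaux (fun i j => (q i j : ℝ)) (fun i => ((v i : ℤ) : ℝ)) from rfl,
      Qaux_cast_int_real] at h1
    exact_mod_cast h1
  · intro hZ x hx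
    change 0 < Qaux (fun i j => (q i j : ℝ)) x
    by_contra hnot
    push_neg at hnot
    have hnonneg := Qaux_real_nonneg q hZ
    have hzero : Qaux (fun i j => (q i j : ℝ)) x = 0 := le_antisymm hnot (hnonneg x)
    set MR := Maux (fun i j => ((q i j : ℤ) : ℝ)) with hMR
    have hpsd : MR.PosSemidef := by
      refine Matrix.PosSemidef.of_dotProduct_mulVec_nonneg ?_ ?_
      · ext i j
        simp only [Matrix.conjTranspose_apply, star_trivial]
        exact Maux_symm _ i j
      · intro y
        rw [star_trivial, hMR, dot_Maux]
        have := hnonneg y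
        linarith
    have hker : MR *ᵥ x = 0 := by
      rw [← hpsd.dotProduct_mulVec_zero_iff x, star_trivial, hMR, dot_Maux, hzero, mul_zero]
    have hdetR : MR.det = 0 := Matrix.exists_mulVec_eq_zero_iff.mp ⟨x, hx, hker⟩
    set MQ := Maux (fun i j => ((q i j : ℤ) : ℚ)) with hMQ
    have hmap : MQ.map ((Rat.castHom ℝ) : ℚ → ℝ) = MR := by
      ext i j
      simp only [hMQ, hMR, Maux, Matrix.map_apply, Matrix.of_apply]
      split_ifs <;> simp
    have hdetQ : MQ.det = 0 := by
      have hmd := (Rat.castHom ℝ).map_det MQ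
      rw [RingHom.mapMatrix_apply, hmap, hdetR] at hmd
      have h0 : ((MQ.det : ℚ) : ℝ) = 0 := hmd
      exact_mod_cast h0
    obtain ⟨v, hvne, hv⟩ := Matrix.exists_mulVec_eq_zero_iff.mpr hdetQ
    have h2 : 2 * Qaux (fun i j => (q i j : ℚ)) v = 0 := by
      rw [← dot_Maux, ← hMQ, hv, dotProduct_zero]
    have h3 : Qaux (fun i j => (q i j : ℚ)) v = 0 := by linarith
    have h4 := Qaux_rat_pos q hZ v hvne
    linarith
end

section
/- Let n ≥ 2 and let A ∈ M_n(ℤ) be the upper-triangular matrix with entries a_{i,i+s} = 1 if s is even, a_{i,i+s} = −1 if s is odd (for 0 ≤ s ≤ n − i), and a_{ij} = 0 for i > j. Then A is positive definite, i.e., xᵀ·A·x > 0 for all nonzero x ∈ ℝⁿ. -/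
open Matrix

/-- The Nakayama matrix `A^(n)`: upper triangular with `a_{ij} = (-1)^(j-i)` for
`i ≤ j` and `0` below the diagonal. -/
def nakayama (n : ℕ) : Matrix (Fin n) (Fin n) ℝ :=
  Matrix.of fun i j =>
    if (i : ℕ) ≤ (j : ℕ) then (-1 : ℝ) ^ ((j : ℕ) - (i : ℕ)) else 0

/-- Auxiliary backwards recursion: `nakaYaux X n m` is `Y (n - m)` where
`Y k = ∑_{j=k}^{n-1} (-1)^(j-k) X j`. -/
noncomputable def nakaYaux (X : ℕ → ℝ) (n : ℕ) : ℕ → ℝ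
  | 0 => 0
  | m + 1 => X (n - (m + 1)) - nakaYaux X n m

lemma nakaY_top (X : ℕ → ℝ) (n k : ℕ) (hk : n ≤ k) : nakaYaux X n (n - k) = 0 := by
  rw [Nat.sub_eq_zero_of_le hk]; rfl

lemma nakaY_rec (X : ℕ → ℝ) (n k : ℕ) (hk : k < n) :
    nakaYaux X n (n - k) = X k - nakaYaux X n (n - (k + 1)) := by
  have h1 : n - k = (n - (k + 1)) + 1 := by omega
  rw [h1, nakaYaux]
  congr 2
  omega

lemma nakaR_top (X : ℕ → ℝ) (n k : ℕ) (hk : n ≤ k) :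
    (∑ j ∈ Finset.range n, if k ≤ j then (-1 : ℝ) ^ (j - k) * X j else 0) = 0 := by
  apply Finset.sum_eq_zero
  intro j hj
  rw [if_neg]
  simp only [Finset.mem_range] at hj
  omega

lemma nakaR_rec (X : ℕ → ℝ) (n k : ℕ) (hk : k < n) :
    (∑ j ∈ Finset.range n, if k ≤ j then (-1 : ℝ) ^ (j - k) * X j else 0)
      + (∑ j ∈ Finset.range n, if k + 1 ≤ j then (-1 : ℝ) ^ (j - (k + 1)) * X j else 0)
      = X k := by
  rw [← Finset.sum_add_distrib]
  have : ∀ j ∈ Finset.range n,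
      ((if k ≤ j then (-1 : ℝ) ^ (j - k) * X j else 0)
        + (if k + 1 ≤ j then (-1 : ℝ) ^ (j - (k + 1)) * X j else 0))
      = if j = k then X k else 0 := by
    intro j _
    by_cases hjk : j = k
    · subst hjk
      rw [if_pos le_rfl, if_neg (by omega), if_pos rfl]
      simp
    · rw [if_neg hjk]
      by_cases hkj : k ≤ j
      · have hkj1 : k + 1 ≤ j := by omega
        rw [if_pos hkj, if_pos hkj1]
        have h2 : j - k = (j - (k + 1)) + 1 := by omega
        rw [h2, pow_succ]
        ring
      · rw [if_neg hkj, if_neg (by omega)]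
        ring
  rw [Finset.sum_congr rfl this, Finset.sum_ite_eq' (Finset.range n) k]
  rw [if_pos (Finset.mem_range.mpr hk)]

lemma nakaY_eq_sum (X : ℕ → ℝ) (n : ℕ) : ∀ k,
    nakaYaux X n (n - k)
      = ∑ j ∈ Finset.range n, if k ≤ j then (-1 : ℝ) ^ (j - k) * X j else 0 := by
  have key : ∀ m k, n - k ≤ m → nakaYaux X n (n - k)
      = ∑ j ∈ Finset.range n, if k ≤ j then (-1 : ℝ) ^ (j - k) * X j else 0 := by
    intro m
    induction m with
    | zero =>
      intro k hk
      rw [nakaY_top X n k (by omega), nakaR_top X n k (by omega)]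
    | succ m ih =>
      intro k hk
      by_cases hkn : n ≤ k
      · rw [nakaY_top X n k hkn, nakaR_top X n k hkn]
      · have hk' : k < n := lt_of_not_ge hkn
        rw [nakaY_rec X n k hk', ih (k + 1) (by omega)]
        have := nakaR_rec X n k hk'
        linarith
  intro k
  exact key (n - k) k le_rfl

/-- The Nakayama matrix is positive definite: `xᵀ·A·x > 0` for all nonzero `x`. -/
theorem nakayama_posDef (n : ℕ) (hn : 2 ≤ n) :
    ∀ x : Fin n → ℝ, x ≠ 0 → 0 < x ⬝ᵥ (nakayama n).mulVec x := by
  intro x hx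
  classical
  set X : ℕ → ℝ := fun k => if h : k < n then x ⟨k, h⟩ else 0 with hXdef
  set Y : ℕ → ℝ := fun k => nakaYaux X n (n - k) with hYdef
  have hXcoe : ∀ j : Fin n, X (j : ℕ) = x j := by
    intro j
    simp [hXdef, j.isLt]
  -- mulVec equals Y
  have hmul : ∀ i : Fin n, (nakayama n).mulVec x i = Y (i : ℕ) := by
    intro i
    have hR := nakaY_eq_sum X n (i : ℕ)
    rw [hYdef]
    simp only []
    rw [hR, ← Fin.sum_univ_eq_sum_range
      (fun j => if (i : ℕ) ≤ j then (-1 : ℝ) ^ (j - (i : ℕ)) * X j else 0) n]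
    simp only [mulVec, dotProduct, nakayama, Matrix.of_apply]
    apply Finset.sum_congr rfl
    intro j _
    rw [hXcoe j, ite_mul, zero_mul]
  -- the quadratic form as a range sum
  have hform : x ⬝ᵥ (nakayama n).mulVec x = ∑ k ∈ Finset.range n, X k * Y k := by
    rw [← Fin.sum_univ_eq_sum_range (fun k => X k * Y k) n]
    apply Finset.sum_congr rfl
    intro i _
    rw [hmul i, hXcoe i]
  -- doubling identity
  have hdouble : ∑ k ∈ Finset.range n, 2 * (X k * Y k)
      = (∑ k ∈ Finset.range n, X k ^ 2) + (Y 0 ^ 2 - Y n ^ 2) := by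
    have h1 : ∀ k ∈ Finset.range n,
        2 * (X k * Y k) = X k ^ 2 + (Y k ^ 2 - Y (k + 1) ^ 2) := by
      intro k hk
      have hkn : k < n := Finset.mem_range.mp hk
      have hXk : X k = Y k + Y (k + 1) := by
        have := nakaY_rec X n k hkn
        rw [hYdef]
        simp only []
        linarith
      rw [hXk]; ring
    rw [Finset.sum_congr rfl h1, Finset.sum_add_distrib,
      Finset.sum_range_sub' (fun k => Y k ^ 2) n]
  have hYn : Y n = 0 := by
    rw [hYdef]
    simp only []
    exact nakaY_top X n n le_rfl
  -- positivity of the sum of squares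
  have hpos : 0 < ∑ k ∈ Finset.range n, X k ^ 2 := by
    rw [← Fin.sum_univ_eq_sum_range (fun k => X k ^ 2) n]
    obtain ⟨i, hi⟩ := Function.ne_iff.mp hx
    apply Finset.sum_pos' (fun j _ => sq_nonneg _) ⟨i, Finset.mem_univ i, ?_⟩
    rw [hXcoe i]
    have : x i ≠ 0 := hi
    positivity
  have hY0 : 0 ≤ Y 0 ^ 2 := sq_nonneg _
  have h2 : ∑ k ∈ Finset.range n, 2 * (X k * Y k)
      = 2 * ∑ k ∈ Finset.range n, X k * Y k := by
    rw [Finset.mul_sum]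
  rw [hform]
  rw [hYn] at hdouble
  rw [h2] at hdouble
  nlinarith [hdouble, hpos, hY0]
end

section
/- The quadratic form of the Nakayama matrix A^(n) satisfies q(x) = Σ_{i=1}^{n} x_i² + Σ_{i<j} (−1)^{j−i} x_i x_j, and for all x ∈ ℝⁿ, 2·q(x) = (Σ_{i=1}^{n} (−1)^i x_i)² + Σ_{i=1}^{n} x_i², hence q(x) > 0 for every nonzero x. -/
open Matrix BigOperators Finset

lemma neg_one_pow_sub {i j : ℕ} (h : i ≤ j) :
    ((-1 : ℝ)) ^ (j - i) = (-1 : ℝ) ^ (i + j) := by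
  have : i + j = (j - i) + 2 * i := by omega
  rw [this, pow_add, pow_mul]
  simp

lemma nakayama_expand (n : ℕ) (x : Fin n → ℝ) :
    x ⬝ᵥ (nakayama n).mulVec x =
      ∑ i : Fin n, ∑ j : Fin n, x i * nakayama n i j * x j := by
  simp only [dotProduct, Matrix.mulVec, dotProduct, Finset.mul_sum]
  exact Finset.sum_congr rfl fun i _ => Finset.sum_congr rfl fun j _ => by ring

/-- The quadratic form `q` of the Nakayama matrix satisfies
`q(x) = ∑ x_i² + ∑_{i<j} (-1)^(j-i) x_i x_j`, and
`2 q(x) = (∑ (-1)^i x_i)² + ∑ x_i²`, hence `q(x) > 0` for every nonzero `x`. -/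
theorem nakayama_quadForm (n : ℕ) :
    (∀ x : Fin n → ℝ,
      x ⬝ᵥ (nakayama n).mulVec x =
        (∑ i, x i ^ 2) +
          ∑ i : Fin n, ∑ j : Fin n, if (i : ℕ) < (j : ℕ) then
            (-1 : ℝ) ^ ((j : ℕ) - (i : ℕ)) * x i * x j else 0) ∧
    (∀ x : Fin n → ℝ,
      2 * (x ⬝ᵥ (nakayama n).mulVec x) =
        (∑ i : Fin n, (-1 : ℝ) ^ (i : ℕ) * x i) ^ 2 + ∑ i, x i ^ 2) ∧
    (∀ x : Fin n → ℝ, x ≠ 0 → 0 < x ⬝ᵥ (nakayama n).mulVec x) := by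
  have key1 : ∀ x : Fin n → ℝ,
      x ⬝ᵥ (nakayama n).mulVec x =
        (∑ i, x i ^ 2) +
          ∑ i : Fin n, ∑ j : Fin n, if (i : ℕ) < (j : ℕ) then
            (-1 : ℝ) ^ ((j : ℕ) - (i : ℕ)) * x i * x j else 0 := by
    intro x
    rw [nakayama_expand]
    have : ∀ i j : Fin n, x i * nakayama n i j * x j =
        (if i = j then x i ^ 2 else 0) +
          (if (i : ℕ) < (j : ℕ) then (-1 : ℝ) ^ ((j : ℕ) - (i : ℕ)) * x i * x j else 0) := by
      intro i j
      simp only [nakayama, Matrix.of_apply]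
      rcases lt_trichotomy (i : ℕ) (j : ℕ) with h | h | h
      · have hne : i ≠ j := fun e => by simp [e] at h
        rw [if_pos h.le, if_neg hne, if_pos h]
        ring
      · have he : i = j := Fin.ext h
        subst he
        simp
        ring
      · have hne : i ≠ j := fun e => by simp [e] at h
        rw [if_neg (not_le.mpr h), if_neg hne, if_neg (by omega)]
        ring
    simp only [this, Finset.sum_add_distrib]
    congr 1
    exact Finset.sum_congr rfl fun i _ => by simp
  have key2 : ∀ x : Fin n → ℝ,
      2 * (x ⬝ᵥ (nakayama n).mulVec x) =
        (∑ i : Fin n, (-1 : ℝ) ^ (i : ℕ) * x i) ^ 2 + ∑ i, x i ^ 2 := by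
    intro x
    rw [nakayama_expand]
    have hsq : (∑ i : Fin n, (-1 : ℝ) ^ (i : ℕ) * x i) ^ 2 =
        ∑ i : Fin n, ∑ j : Fin n, (-1 : ℝ) ^ ((i : ℕ) + (j : ℕ)) * x i * x j := by
      rw [sq, Finset.sum_mul_sum]
      exact Finset.sum_congr rfl fun i _ => Finset.sum_congr rfl fun j _ => by
        rw [pow_add]; ring
    have hdiag : (∑ i, x i ^ 2) =
        ∑ i : Fin n, ∑ j : Fin n, (if i = j then x i ^ 2 else 0) := by
      exact Finset.sum_congr rfl fun i _ => by simp
    rw [hsq, hdiag, ← Finset.sum_add_distrib]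
    simp only [← Finset.sum_add_distrib]
    have comm : ∑ i : Fin n, ∑ j : Fin n, x i * nakayama n i j * x j =
        ∑ i : Fin n, ∑ j : Fin n, x j * nakayama n j i * x i := Finset.sum_comm
    calc 2 * ∑ i : Fin n, ∑ j : Fin n, x i * nakayama n i j * x j
        = ∑ i : Fin n, ∑ j : Fin n,
            (x i * nakayama n i j * x j + x j * nakayama n j i * x i) := by
          rw [two_mul]
          nth_rewrite 2 [comm]
          rw [← Finset.sum_add_distrib]
          exact Finset.sum_congr rfl fun i _ => by rw [← Finset.sum_add_distrib]
      _ = _ := by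
          refine Finset.sum_congr rfl fun i _ => Finset.sum_congr rfl fun j _ => ?_
          simp only [nakayama, Matrix.of_apply]
          rcases lt_trichotomy (i : ℕ) (j : ℕ) with h | h | h
          · have hne : i ≠ j := fun e => by simp [e] at h
            rw [if_pos h.le, if_neg (by omega : ¬ (j:ℕ) ≤ (i:ℕ)), if_neg hne,
              neg_one_pow_sub h.le]
            ring
          · have he : i = j := Fin.ext h
            subst he
            simp
            ring
          · have hne : i ≠ j := fun e => by simp [e] at h
            rw [if_neg (not_le.mpr h), if_pos h.le, if_neg hne,
              neg_one_pow_sub h.le]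
            have : (j : ℕ) + (i : ℕ) = (i : ℕ) + (j : ℕ) := by omega
            rw [this]
            ring
  refine ⟨key1, key2, fun x hx => ?_⟩
  have h2 := key2 x
  obtain ⟨i, hi⟩ : ∃ i, x i ≠ 0 := by
    by_contra h
    push_neg at h
    exact hx (funext h)
  have hpos : 0 < ∑ i, x i ^ 2 :=
    Finset.sum_pos' (fun j _ => sq_nonneg _) ⟨i, Finset.mem_univ i, by positivity⟩
  nlinarith [sq_nonneg (∑ i : Fin n, (-1 : ℝ) ^ (i : ℕ) * x i)]
end
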